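/- Let p be an odd prime and A the (p-1) x (p-1) matrix over F_p with entries A_{ij} = (p-i)^{p-j}. Then det(A) \equiv (-1)^{(p^2-1)/8} \cdot ((p-1)/2)! \pmod{p}. -/

import Mathlib

-- key pairing lemma: k! * (p-1-k)! = (-1)^(k+1) in ZMod p
lemma key_fac (p : ℕ) [Fact p.Prime] :
    ∀ k, k ≤ p - 1 → (k.factorial : ZMod p) * ((p - 1 - k).factorial : ZMod p) = (-1) ^ (k + 1) := by
  have hp2 : 2 ≤ p := (Fact.out : p.Prime).two_le
  intro k
  induction k with
  | zero => intro _; simp [ZMod.wilsons_lemma]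
  | succ k ih =>
    intro hk
    have hk' : k ≤ p - 1 := by omega
    have h1 : p - 1 - k = (p - 1 - (k + 1)) + 1 := by omega
    have h2 : ((p - 1 - k : ℕ) : ZMod p) = -((k + 1 : ℕ) : ZMod p) := by
      have hadd : (p - 1 - k) + (k + 1) = p := by omega
      have := congrArg (Nat.cast : ℕ → ZMod p) hadd
      push_cast at this
      simp only [ZMod.natCast_self] at this
      push_cast
      linear_combination this
    have key : ((p - 1 - k).factorial : ZMod p)
        = -((k + 1 : ℕ) : ZMod p) * ((p - 1 - (k + 1)).factorial : ZMod p) := by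
      rw [h1, Nat.factorial_succ, Nat.cast_mul, ← h1, h2]
    have ihk := ih hk'
    rw [key] at ihk
    rw [Nat.factorial_succ, Nat.cast_mul, pow_succ]
    push_cast at ihk ⊢
    linear_combination (-1 : ZMod p) * ihk


lemma prod_fac (p m : ℕ) [Fact p.Prime] (hh : p = 2 * (m + 1) + 1) :
    (∏ k ∈ Finset.range (p - 1), (k.factorial : ZMod p))
      = (-1) ^ (∑ k ∈ Finset.range m, (k + 2)) * ((m + 1).factorial : ZMod p) := by
  have e1 : p - 1 = (m + 1) + (m + 1) := by omega
  rw [e1, Finset.prod_range_add]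
  rw [Finset.prod_range_succ' (fun k => (k.factorial : ZMod p)) m]
  rw [Finset.prod_range_succ' (fun k => (((m + 1) + k).factorial : ZMod p)) m]
  simp only [Nat.factorial_zero, Nat.cast_one, mul_one, Nat.add_zero]
  -- reflect the second product
  rw [← Finset.prod_range_reflect (fun k => (((m + 1) + (k + 1)).factorial : ZMod p)) m]
  rw [← mul_assoc, ← Finset.prod_mul_distrib]
  have hstep : ∀ k ∈ Finset.range m,
      ((k + 1).factorial : ZMod p) * (((m + 1) + (m - 1 - k + 1)).factorial : ZMod p)
        = (-1) ^ (k + 2) := by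
    intro k hk
    have hkm : k < m := Finset.mem_range.mp hk
    have h2 : (m + 1) + (m - 1 - k + 1) = p - 1 - (k + 1) := by omega
    rw [h2]
    have := key_fac p (k + 1) (by omega)
    simpa using this
  rw [Finset.prod_congr rfl hstep, Finset.prod_pow_eq_pow_sum]

/-- For an odd prime `p`, the `(p-1)×(p-1)` matrix `A` over `F_p` with entries
`A_{ij} = (p-i)^{p-j}` satisfies `det A ≡ (-1)^{(p²-1)/8}·((p-1)/2)! (mod p)`. -/

theorem det_vandermonde_type (p : ℕ) (hp : p.Prime) (hodd : Odd p) :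
    Matrix.det (Matrix.of fun i j : Fin (p - 1) =>
        ((p - (i.val + 1) : ℕ) : ZMod p) ^ (p - (j.val + 1))) =
      (-1 : ZMod p) ^ ((p ^ 2 - 1) / 8) * (((p - 1) / 2).factorial : ZMod p) := by
  haveI : Fact p.Prime := ⟨hp⟩
  have hp2 : 2 ≤ p := hp.two_le
  obtain ⟨h, hh⟩ := hodd
  obtain ⟨m, rfl⟩ : ∃ m, h = m + 1 := ⟨h - 1, by omega⟩
  -- Step 1: reverse rows and columns, and factor out one power from each row
  have step1 : (Matrix.of fun i j : Fin (p - 1) =>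
        ((p - (i.val + 1) : ℕ) : ZMod p) ^ (p - (j.val + 1))) =
      (Matrix.of fun i j : Fin (p - 1) =>
        ((i.val + 1 : ℕ) : ZMod p) *
          (Matrix.vandermonde fun i : Fin (p - 1) => ((i.val + 1 : ℕ) : ZMod p)) i j).submatrix
        Fin.revPerm Fin.revPerm := by
    ext i j
    have hi := i.isLt
    have hj := j.isLt
    simp only [Matrix.submatrix_apply, Matrix.of_apply, Matrix.vandermonde_apply,
      Fin.revPerm_apply]
    rw [← pow_succ']
    congr 1
    · congr 1
      rw [Fin.val_rev]
      omega
    · rw [Fin.val_rev]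
      omega
  rw [step1, Matrix.det_submatrix_equiv_self, Matrix.det_mul_column, Matrix.det_vandermonde]
  -- Step 2: the product of the row factors is (p-1)! = -1 by Wilson
  have hw : (∏ i : Fin (p - 1), ((i.val + 1 : ℕ) : ZMod p)) = -1 := by
    rw [← Nat.cast_prod,
      Fin.prod_univ_eq_prod_range (fun i => i + 1) (p - 1),
      Finset.prod_range_add_one_eq_factorial, ZMod.wilsons_lemma]
  rw [hw]
  -- Step 3: each inner product is a factorial
  have inner : ∀ i : Fin (p - 1), (∏ j ∈ Finset.Ioi i,
      (((j.val + 1 : ℕ) : ZMod p) - ((i.val + 1 : ℕ) : ZMod p)))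
      = ((p - 2 - i.val).factorial : ZMod p) := by
    intro i
    have hi := i.isLt
    have e : ∀ j ∈ Finset.Ioi i, ((j.val + 1 : ℕ) : ZMod p) - ((i.val + 1 : ℕ) : ZMod p)
        = ((j.val - i.val : ℕ) : ZMod p) := by
      intro j hj
      have hij : i.val < j.val := Fin.lt_def.mp (Finset.mem_Ioi.mp hj)
      rw [Nat.cast_sub (le_of_lt hij)]
      push_cast
      ring
    rw [Finset.prod_congr rfl e, ← Nat.cast_prod]
    congr 1
    rw [← Finset.prod_range_add_one_eq_factorial]
    refine Finset.prod_bij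
      (fun (j : Fin (p - 1)) (_ : j ∈ Finset.Ioi i) => j.val - i.val - 1) ?_ ?_ ?_ ?_
    · intro a ha
      have h1 : i.val < a.val := Fin.lt_def.mp (Finset.mem_Ioi.mp ha)
      have h2 := a.isLt
      simp only [Finset.mem_range]
      omega
    · intro a ha b hb hab
      have ha' : i.val < a.val := Fin.lt_def.mp (Finset.mem_Ioi.mp ha)
      have hb' : i.val < b.val := Fin.lt_def.mp (Finset.mem_Ioi.mp hb)
      exact Fin.ext (by omega)
    · intro b hb
      have hb' := Finset.mem_range.mp hb
      refine ⟨⟨i.val + 1 + b, by omega⟩, Finset.mem_Ioi.mpr (Fin.lt_def.mpr ?_), ?_⟩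
      · dsimp only
        omega
      · dsimp only
        omega
    · intro a ha
      have h1 : i.val < a.val := Fin.lt_def.mp (Finset.mem_Ioi.mp ha)
      omega
  rw [Fintype.prod_congr _ _ inner]
  -- Step 4: reindex the outer product
  have outer : (∏ i : Fin (p - 1), (((p - 2 - i.val).factorial : ℕ) : ZMod p))
      = ∏ k ∈ Finset.range (p - 1), (k.factorial : ZMod p) := by
    rw [Fin.prod_univ_eq_prod_range (fun k => (((p - 2 - k).factorial : ℕ) : ZMod p)) (p - 1)]
    have e : ∀ k ∈ Finset.range (p - 1),
        (((p - 2 - k).factorial : ℕ) : ZMod p) = (((p - 1) - 1 - k).factorial : ZMod p) := by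
      intro k hk
      have e2 : p - 2 - k = p - 1 - 1 - k := by omega
      rw [e2]
    rw [Finset.prod_congr rfl e,
      Finset.prod_range_reflect (fun k => ((k.factorial : ℕ) : ZMod p)) (p - 1)]
  rw [outer, prod_fac p m hh]
  -- Step 5: the exponent arithmetic
  have hexp : (p ^ 2 - 1) / 8 = (∑ k ∈ Finset.range m, (k + 2)) + 1 := by
    have h1 : (∑ k ∈ Finset.range m, (k + 2)) = (∑ k ∈ Finset.range m, k) + 2 * m := by
      rw [Finset.sum_add_distrib, Finset.sum_const, Finset.card_range, smul_eq_mul]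
      ring
    have h2 : (∑ k ∈ Finset.range m, k) * 2 + m = m * m := by
      rw [Finset.sum_range_id_mul_two]
      cases m with
      | zero => simp
      | succ k =>
        simp only [Nat.succ_sub_one]
        ring
    have h3 : p ^ 2 = 4 * (m * m) + 12 * m + 9 := by rw [hh]; ring
    rw [h3, h1]
    generalize m * m = A at h2 ⊢
    omega
  rw [show (p - 1) / 2 = m + 1 from by omega, hexp]
  ring
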